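/- Let X and Y be scoring rules on a candidate set C of size m given by non-increasing vectors (x_1,…,x_m) and (y_1,…,y_m), let T be a tie-breaking order on C, let P be a profile, let c and a be distinct candidates, and let i ≠ j be positions in {1,…,m}. Write s_X(e) and s_Y(e) for the total X- and Y-scores of candidate e in P. Assume that s_X(a) + x_j < s_X(c) + x_i, or these are equal and c is T-greater than a; and that s_Y(c) + y_i < s_Y(a) + y_j, or these are equal and a is T-greater than c. Then the following are equivalent: (1) there exists a vote v placing c at position i and a at position j such that c is the X-winner of P ++ [v] and a is the Y-winner of P ++ [v]; (2) there exists a bijection σ from C∖{c,a} to {1,…,m}∖{i,j} such that for every e ∈ C∖{c,a}: s_X(e) + x_{σ(e)} < s_X(c) + x_i, or these are equal and c is T-greater than e; and s_Y(e) + y_{σ(e)} < s_Y(a) + y_j, or these are equal and a is T-greater than e. -/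

import Mathlib

/-
Combining two different scoring rules by a run-off is not consistent.
Votes on the finite candidate set `C` (with `m = |C|`) are duplicate-free
lists of all candidates (earlier = more preferred); positions are 1-based.
-/

variable {C : Type*} [Fintype C] [DecidableEq C]

/-- `v` is a vote: a strict linear order of all candidates. -/
def ValidVote (v : List C) : Prop := v.Nodup ∧ v.toFinset = Finset.univ

/-- `P` is a profile: a finite list of votes. -/
def ValidProfile (P : List (List C)) : Prop := ∀ v ∈ P, ValidVote v

/-- `N P x y`: the number of votes in `P` ranking `x` above `y`. -/
def pairN (P : List (List C)) (x y : C) : ℕ :=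
  (P.filter fun v => v.idxOf x < v.idxOf y).length

/-- Total score of candidate `e` in profile `P` under the scoring vector `s`
(a candidate ranked at (1-based) position `r` in a vote receives `s r`). -/
def scoreTotal (s : ℕ → ℝ) (P : List (List C)) (e : C) : ℝ :=
  (P.map fun v => s (v.idxOf e + 1)).sum

open scoped Classical in
/-- The scoring-rule winner: the `T`-greatest candidate among those of maximal
total score. -/
noncomputable def scoringWinner [Nonempty C] (T : LinearOrder C) (s : ℕ → ℝ)
    (P : List (List C)) : C :=
  @Finset.max' C T (Finset.univ.filter fun e => ∀ z, scoreTotal s P z ≤ scoreTotal s P e) (by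
    obtain ⟨b, hb, hm⟩ :=
      Finset.exists_max_image Finset.univ (scoreTotal s P) Finset.univ_nonempty
    exact ⟨b, Finset.mem_filter.2 ⟨Finset.mem_univ _, fun z => hm z (Finset.mem_univ _)⟩⟩)



section ManipHelpers
variable {C : Type*} [Fintype C] [DecidableEq C]

lemma manip_scoreTotal_append (s : ℕ → ℝ) (P : List (List C)) (v : List C) (e : C) :
    scoreTotal s (P ++ [v]) e = scoreTotal s P e + s (v.idxOf e + 1) := by
  simp [scoreTotal]

lemma manip_mem_of_validVote {v : List C} (hv : ValidVote v) (e : C) : e ∈ v := by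
  rw [← List.mem_toFinset, hv.2]; exact Finset.mem_univ e

lemma manip_length_of_validVote {v : List C} (hv : ValidVote v) :
    v.length = Fintype.card C := by
  rw [← Finset.card_univ, ← hv.2, List.toFinset_card_of_nodup hv.1]

lemma manip_winner_eq_iff [Nonempty C] (T : LinearOrder C) (s : ℕ → ℝ)
    (Q : List (List C)) (c : C) :
    scoringWinner T s Q = c ↔ ∀ e, e ≠ c →
      scoreTotal s Q e < scoreTotal s Q c ∨
        (scoreTotal s Q e = scoreTotal s Q c ∧ T.lt e c) := by
  classical
  letI := T
  unfold scoringWinner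
  constructor
  · intro h e he
    have hc : c ∈ Finset.univ.filter
        fun e => ∀ z, scoreTotal s Q z ≤ scoreTotal s Q e := by
      rw [← h]; exact Finset.max'_mem _ _
    have hmax : ∀ z, scoreTotal s Q z ≤ scoreTotal s Q c := (Finset.mem_filter.1 hc).2
    rcases lt_or_eq_of_le (hmax e) with h1 | h1
    · exact Or.inl h1
    · refine Or.inr ⟨h1, ?_⟩
      have he' : e ∈ Finset.univ.filter
          fun e => ∀ z, scoreTotal s Q z ≤ scoreTotal s Q e :=
        Finset.mem_filter.2 ⟨Finset.mem_univ _, fun z => h1 ▸ hmax z⟩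
      have hle := Finset.le_max' _ e he'
      rw [h] at hle
      exact lt_of_le_of_ne hle he
  · intro h
    have hmax : ∀ z, scoreTotal s Q z ≤ scoreTotal s Q c := by
      intro z
      by_cases hz : z = c
      · subst hz; exact le_rfl
      · rcases h z hz with h1 | h1
        · exact h1.le
        · exact h1.1.le
    have hc : c ∈ Finset.univ.filter
        fun e => ∀ z, scoreTotal s Q z ≤ scoreTotal s Q e :=
      Finset.mem_filter.2 ⟨Finset.mem_univ _, hmax⟩
    refine le_antisymm ?_ (Finset.le_max' _ _ hc)
    apply Finset.max'_le
    intro e he'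
    by_cases hec : e = c
    · exact le_of_eq hec
    · rcases h e hec with h1 | h1
      · exact absurd ((Finset.mem_filter.1 he').2 c) (not_le.2 h1)
      · exact le_of_lt h1.2

end ManipHelpers

/-- Characterisation of single-manipulator votes for a pair of scoring rules
via perfect matchings: fixing (1-based) positions `i ≠ j` for the candidates
`c ≠ a`, and assuming `c` beats `a` under `X` (strictly, or tied with `c`
`T`-greater) and `a` beats `c` under `Y` (strictly, or tied with `a`
`T`-greater) once placed there, there exists a vote `v` placing `c` at
position `i` and `a` at position `j` making `c` the `X`-winner and `a` the
`Y`-winner of `P ++ [v]` iff there is a bijection `σ` from the remaining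
candidates onto the remaining positions such that `c` beats every remaining
candidate under `X` and `a` beats every remaining candidate under `Y`. -/
theorem manipulation_matching [Nonempty C]
    (T : LinearOrder C) (x y : ℕ → ℝ)
    (hx : ∀ r r', 1 ≤ r → r ≤ r' → r' ≤ Fintype.card C → x r' ≤ x r)
    (hy : ∀ r r', 1 ≤ r → r ≤ r' → r' ≤ Fintype.card C → y r' ≤ y r)
    (P : List (List C)) (hP : ValidProfile P)
    (c a : C) (hca : c ≠ a)
    (i j : ℕ) (hi1 : 1 ≤ i) (hi2 : i ≤ Fintype.card C)
    (hj1 : 1 ≤ j) (hj2 : j ≤ Fintype.card C) (hij : i ≠ j)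
    (hXca : scoreTotal x P a + x j < scoreTotal x P c + x i ∨
      (scoreTotal x P a + x j = scoreTotal x P c + x i ∧ T.lt a c))
    (hYac : scoreTotal y P c + y i < scoreTotal y P a + y j ∨
      (scoreTotal y P c + y i = scoreTotal y P a + y j ∧ T.lt c a)) :
    (∃ v : List C, ValidVote v ∧ v.idxOf c + 1 = i ∧ v.idxOf a + 1 = j ∧
        scoringWinner T x (P ++ [v]) = c ∧ scoringWinner T y (P ++ [v]) = a) ↔
    (∃ σ : C → ℕ,
        Set.BijOn σ {e | e ≠ c ∧ e ≠ a}
          {r | 1 ≤ r ∧ r ≤ Fintype.card C ∧ r ≠ i ∧ r ≠ j} ∧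
        ∀ e, e ≠ c → e ≠ a →
          (scoreTotal x P e + x (σ e) < scoreTotal x P c + x i ∨
            (scoreTotal x P e + x (σ e) = scoreTotal x P c + x i ∧ T.lt e c)) ∧
          (scoreTotal y P e + y (σ e) < scoreTotal y P a + y j ∨
            (scoreTotal y P e + y (σ e) = scoreTotal y P a + y j ∧ T.lt e a))) := by
  
  set m := Fintype.card C with hm
  constructor
  · rintro ⟨v, hv, hci, haj, hwx, hwy⟩
    have hlen : v.length = m := manip_length_of_validVote hv
    have hmem : ∀ e : C, e ∈ v := manip_mem_of_validVote hv
    refine ⟨fun e => v.idxOf e + 1, ⟨?_, ?_, ?_⟩, ?_⟩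
    · rintro e ⟨hec, hea⟩
      simp only [Set.mem_setOf_eq]
      have hlt := List.idxOf_lt_length_iff.2 (hmem e)
      refine ⟨by omega, by omega, fun h => hec ?_, fun h => hea ?_⟩
      · exact (List.idxOf_inj (hmem e)).1 (by omega)
      · exact (List.idxOf_inj (hmem e)).1 (by omega)
    · intro e _ e' _ h
      have h' : v.idxOf e + 1 = v.idxOf e' + 1 := h
      exact (List.idxOf_inj (hmem e)).1 (by omega)
    · rintro r ⟨hr1, hr2, hri, hrj⟩
      have hrlt : r - 1 < v.length := by omega
      refine ⟨v.get ⟨r - 1, hrlt⟩, ⟨?_, ?_⟩, ?_⟩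
      · intro h
        have h2 := List.Nodup.idxOf_getElem hv.1 (r - 1) hrlt
        rw [List.get_eq_getElem] at h
        rw [h] at h2
        omega
      · intro h
        have h2 := List.Nodup.idxOf_getElem hv.1 (r - 1) hrlt
        rw [List.get_eq_getElem] at h
        rw [h] at h2
        omega
      · have := List.Nodup.idxOf_getElem hv.1 (r - 1) hrlt
        simp only [Set.mem_setOf_eq, List.get_eq_getElem, this]
        omega
    · intro e hec hea
      have h1 := (manip_winner_eq_iff T x (P ++ [v]) c).1 hwx e hec
      have h2 := (manip_winner_eq_iff T y (P ++ [v]) a).1 hwy e hea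
      rw [manip_scoreTotal_append, manip_scoreTotal_append, hci] at h1
      rw [manip_scoreTotal_append, manip_scoreTotal_append, haj] at h2
      exact ⟨h1, h2⟩
  · rintro ⟨σ, ⟨hmap, hinj, hsur⟩, hσ⟩
    classical
    set τ : C → ℕ := fun e => if e = c then i else if e = a then j else σ e with hτ
    have hτc : τ c = i := by simp [hτ]
    have hτa : τ a = j := by simp [hτ, hca.symm]
    have hτe : ∀ e, e ≠ c → e ≠ a → τ e = σ e := by
      intro e hec hea; simp [hτ, hec, hea]
    have hτmem : ∀ e, 1 ≤ τ e ∧ τ e ≤ m := by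
      intro e
      by_cases hec : e = c
      · subst hec; rw [hτc]; exact ⟨hi1, hi2⟩
      by_cases hea : e = a
      · subst hea; rw [hτa]; exact ⟨hj1, hj2⟩
      · rw [hτe e hec hea]
        have := hmap ⟨hec, hea⟩
        exact ⟨this.1, this.2.1⟩
    have hτinj : Function.Injective τ := by
      intro e e' h
      by_cases hec : e = c
      · by_cases hec' : e' = c
        · exact hec.trans hec'.symm
        by_cases hea' : e' = a
        · rw [hec, hea', hτc, hτa] at h; exact absurd h hij
        rw [hec, hτc, hτe e' hec' hea'] at h
        exact absurd h.symm (hmap ⟨hec', hea'⟩).2.2.1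
      by_cases hea : e = a
      · by_cases hec' : e' = c
        · rw [hea, hec', hτa, hτc] at h; exact absurd h.symm hij
        by_cases hea' : e' = a
        · exact hea.trans hea'.symm
        rw [hea, hτa, hτe e' hec' hea'] at h
        exact absurd h.symm (hmap ⟨hec', hea'⟩).2.2.2
      by_cases hec' : e' = c
      · rw [hec', hτe e hec hea, hτc] at h
        exact absurd h (hmap ⟨hec, hea⟩).2.2.1
      by_cases hea' : e' = a
      · rw [hea', hτe e hec hea, hτa] at h
        exact absurd h (hmap ⟨hec, hea⟩).2.2.2
      rw [hτe e hec hea, hτe e' hec' hea'] at h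
      exact hinj ⟨hec, hea⟩ ⟨hec', hea'⟩ h
    have hτsur : ∀ r, 1 ≤ r → r ≤ m → ∃ e, τ e = r := by
      intro r hr1 hr2
      by_cases hri : r = i
      · exact ⟨c, by rw [hτc, hri]⟩
      by_cases hrj : r = j
      · exact ⟨a, by rw [hτa, hrj]⟩
      · obtain ⟨e, he, hre⟩ := hsur (show r ∈ {r | 1 ≤ r ∧ r ≤ m ∧ r ≠ i ∧ r ≠ j}
          from ⟨hr1, hr2, hri, hrj⟩)
        exact ⟨e, by rw [hτe e he.1 he.2]; exact hre⟩
    -- construct the vote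
    have hex : ∀ k, k < m → ∃ e : C, τ e = k + 1 := fun k hk =>
      hτsur (k + 1) (by omega) (by omega)
    set g : ℕ → C := fun k => if h : k < m then (hex k h).choose else Classical.arbitrary C
      with hg
    have hgτ : ∀ k, k < m → τ (g k) = k + 1 := by
      intro k hk
      simp only [hg, dif_pos hk]
      exact (hex k hk).choose_spec
    set v : List C := (List.range m).map g with hvdef
    have hvlen : v.length = m := by simp [hvdef]
    have hvnd : v.Nodup := by
      refine List.Nodup.map_on ?_ (List.nodup_range (n := m))
      intro k hk k' hk' h
      rw [List.mem_range] at hk hk'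
      have := hgτ k hk
      rw [h, hgτ k' hk'] at this
      omega
    have hvv : ValidVote v := by
      refine ⟨hvnd, Finset.eq_univ_of_card _ ?_⟩
      rw [List.toFinset_card_of_nodup hvnd, hvlen]
    have hidx : ∀ e : C, v.idxOf e + 1 = τ e := by
      intro e
      have h1 : 1 ≤ τ e := (hτmem e).1
      have h2 : τ e ≤ m := (hτmem e).2
      have hk : τ e - 1 < m := by omega
      have hgk : g (τ e - 1) = e := by
        apply hτinj
        rw [hgτ _ hk]
        omega
      have hget : v[(τ e - 1)]'(by omega) = e := by
        simp [hvdef, List.getElem_map, hgk]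
      have := List.Nodup.idxOf_getElem hvnd (τ e - 1) (by omega)
      rw [hget] at this
      omega
    refine ⟨v, hvv, by rw [hidx, hτc], by rw [hidx, hτa], ?_, ?_⟩
    · rw [manip_winner_eq_iff]
      intro e hec
      rw [manip_scoreTotal_append, manip_scoreTotal_append, hidx, hidx, hτc]
      by_cases hea : e = a
      · subst hea; rw [hτa]; exact hXca
      · rw [hτe e hec hea]
        exact (hσ e hec hea).1
    · rw [manip_winner_eq_iff]
      intro e hea
      rw [manip_scoreTotal_append, manip_scoreTotal_append, hidx, hidx, hτa]
      by_cases hec : e = c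
      · subst hec; rw [hτc]; exact hYac
      · rw [hτe e hec hea]
        exact (hσ e hec hea).2
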